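/- For nonnegative integers n and real b > 0, the terminating Gauss hypergeometric sum satisfies ₂F₁(−n, b; 2b; 2) = n! · 2^{−n−1} · (1 + (−1)^n) · Γ(b + 1/2) / ((n/2)! · Γ((n+1)/2 + b)); in particular it vanishes for odd n. -/

import Mathlib

open Finset Polynomial

noncomputable def Tm (b : ℝ) (n j : ℕ) : ℝ :=
  (ascPochhammer ℝ j).eval (-(n : ℝ)) * (ascPochhammer ℝ j).eval b
    / ((ascPochhammer ℝ j).eval (2 * b) * (j.factorial : ℝ)) * (2 : ℝ) ^ j

noncomputable def Rhs (b : ℝ) (n : ℕ) : ℝ :=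
  (n.factorial : ℝ) * (2 : ℝ) ^ (-(n : ℝ) - 1) * (1 + (-1 : ℝ) ^ n)
    * Real.Gamma (b + 1/2)
    / (((n / 2).factorial : ℝ) * Real.Gamma (((n : ℝ) + 1) / 2 + b))

lemma poch_eval_succ_left (j : ℕ) (x : ℝ) :
    (ascPochhammer ℝ (j+1)).eval x = x * (ascPochhammer ℝ j).eval (x + 1) := by
  rw [ascPochhammer_succ_left]
  simp [eval_comp]

lemma poch_shift (n j : ℕ) :
    (ascPochhammer ℝ j).eval (-(n:ℝ) - 2) * ((-(n:ℝ) - 2) + j) * ((-(n:ℝ) - 1) + j)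
      = ((n:ℝ)+1) * ((n:ℝ)+2) * (ascPochhammer ℝ j).eval (-(n:ℝ)) := by
  have h1 : (ascPochhammer ℝ (j+2)).eval (-(n:ℝ) - 2)
      = (ascPochhammer ℝ j).eval (-(n:ℝ) - 2) * ((-(n:ℝ)-2) + j) * ((-(n:ℝ)-2) + (↑(j+1):ℝ)) := by
    rw [show j+2 = (j+1)+1 from rfl, ascPochhammer_succ_eval, ascPochhammer_succ_eval]
  have h2 : (ascPochhammer ℝ (j+2)).eval (-(n:ℝ) - 2)
      = (-(n:ℝ)-2) * ((-(n:ℝ)-1) * (ascPochhammer ℝ j).eval (-(n:ℝ))) := by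
    rw [show j+2 = (j+1)+1 from rfl, poch_eval_succ_left,
      show -(n:ℝ)-2+1 = -(n:ℝ)-1 by ring, poch_eval_succ_left,
      show -(n:ℝ)-1+1 = -(n:ℝ) by ring]
  have := h1.symm.trans h2
  push_cast at this ⊢
  nlinarith [this]

lemma point (b : ℝ) (hb : 0 < b) (n j : ℕ) :
    (2*b + (n:ℝ) + 1) * Tm b (n+2) j - ((n:ℝ)+1) * Tm b n j
      = (((j:ℝ)+1) * (1 - 2*b - ((j:ℝ)+1)) / ((n:ℝ)+2)) * Tm b (n+2) (j+1)
        - ((j:ℝ) * (1 - 2*b - (j:ℝ)) / ((n:ℝ)+2)) * Tm b (n+2) j := by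
  have hcast : -((n+2 : ℕ) : ℝ) = -(n:ℝ) - 2 := by push_cast; ring
  simp only [Tm, hcast, ascPochhammer_succ_eval, Nat.factorial_succ, pow_succ]
  set P := (ascPochhammer ℝ j).eval (-(n:ℝ) - 2) with hP
  set Q := (ascPochhammer ℝ j).eval (-(n:ℝ)) with hQdef
  set C := (ascPochhammer ℝ j).eval b with hC
  set D := (ascPochhammer ℝ j).eval (2*b) with hD
  have hDpos : 0 < D := ascPochhammer_pos _ _ (by linarith)
  have hfac : (0:ℝ) < (j.factorial : ℝ) := by positivity
  have h1 : (2*b + (j:ℝ)) ≠ 0 := by positivity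
  have h2 : ((n:ℝ)+1) ≠ 0 := by positivity
  have h3 : ((n:ℝ)+2) ≠ 0 := by positivity
  have h4 : ((j:ℝ)+1) ≠ 0 := by positivity
  have hQ : Q = P * ((-(n:ℝ) - 2) + j) * ((-(n:ℝ) - 1) + j) / (((n:ℝ)+1) * ((n:ℝ)+2)) := by
    rw [eq_div_iff (by positivity), hQdef, hP]
    linear_combination -(poch_shift n j)
  rw [hQ]
  field_simp
  push_cast
  ring

lemma Tm_zero (b : ℝ) (n j : ℕ) (h : n < j) : Tm b n j = 0 := by
  simp [Tm, ascPochhammer_eval_neg_coe_nat_of_lt h]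

lemma sum_ext (b : ℝ) (n m : ℕ) (h : n + 1 ≤ m) :
    ∑ j ∈ range m, Tm b n j = ∑ j ∈ range (n+1), Tm b n j := by
  symm
  apply Finset.sum_subset
  · intro x hx; simp only [mem_range] at *; omega
  · intro j _ hj
    simp only [mem_range, not_lt] at hj
    exact Tm_zero b n j (by omega)

lemma Srec (b : ℝ) (hb : 0 < b) (n : ℕ) :
    (2*b + (n:ℝ) + 1) * (∑ j ∈ range (n+3), Tm b (n+2) j)
      = ((n:ℝ)+1) * (∑ j ∈ range (n+3), Tm b n j) := by
  have key : ∑ j ∈ range (n+3),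
      ((2*b + (n:ℝ) + 1) * Tm b (n+2) j - ((n:ℝ)+1) * Tm b n j) = 0 := by
    have := Finset.sum_range_sub
      (fun j => ((j:ℝ) * (1 - 2*b - (j:ℝ)) / ((n:ℝ)+2)) * Tm b (n+2) j) (n+3)
    calc ∑ j ∈ range (n+3), ((2*b + (n:ℝ) + 1) * Tm b (n+2) j - ((n:ℝ)+1) * Tm b n j)
        = ∑ j ∈ range (n+3),
            ((((j:ℝ)+1) * (1 - 2*b - ((j:ℝ)+1)) / ((n:ℝ)+2)) * Tm b (n+2) (j+1)
              - ((j:ℝ) * (1 - 2*b - (j:ℝ)) / ((n:ℝ)+2)) * Tm b (n+2) j) := by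
          refine Finset.sum_congr rfl fun j _ => point b hb n j
      _ = (((n+3:ℕ):ℝ) * (1 - 2*b - ((n+3:ℕ):ℝ)) / ((n:ℝ)+2)) * Tm b (n+2) (n+3)
            - (((0:ℕ):ℝ) * (1 - 2*b - ((0:ℕ):ℝ)) / ((n:ℝ)+2)) * Tm b (n+2) 0 := by
          rw [← this]
          refine Finset.sum_congr rfl fun j _ => by push_cast; ring
      _ = 0 := by
          rw [Tm_zero b (n+2) (n+3) (by omega)]
          simp
  rw [Finset.sum_sub_distrib, ← Finset.mul_sum, ← Finset.mul_sum] at key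
  linarith

lemma RhsRec (b : ℝ) (hb : 0 < b) (n : ℕ) :
    (2*b + (n:ℝ) + 1) * Rhs b (n+2) = ((n:ℝ)+1) * Rhs b n := by
  rcases Nat.even_or_odd n with he | ho
  · obtain ⟨k, hk⟩ := he
    have hdiv2 : (n+2)/2 = n/2 + 1 := by omega
    have hn2 : n/2 = k := by omega
    have hfac : ((n+2).factorial : ℝ) = ((n:ℝ)+2) * ((n:ℝ)+1) * (n.factorial : ℝ) := by
      rw [show n+2 = (n+1)+1 from rfl, Nat.factorial_succ, Nat.factorial_succ]
      push_cast; ring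
    have hpow : (2 : ℝ) ^ (-((n+2:ℕ) : ℝ) - 1) = (2 : ℝ) ^ (-(n:ℝ) - 1) * (1/4) := by
      rw [show -((n+2:ℕ):ℝ) - 1 = (-(n:ℝ) - 1) + (-2) by push_cast; ring,
        Real.rpow_add (by norm_num)]
      congr 1
      rw [show (-2 : ℝ) = ((-2 : ℤ) : ℝ) by norm_num, Real.rpow_intCast]
      norm_num
    have hneg : ((-1 : ℝ)) ^ (n+2) = (-1:ℝ) ^ n := by
      rw [pow_add]; norm_num
    have hgamma : Real.Gamma ((((n+2:ℕ):ℝ) + 1) / 2 + b)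
        = (((n:ℝ)+1)/2 + b) * Real.Gamma (((n:ℝ)+1)/2 + b) := by
      rw [show (((n+2:ℕ):ℝ) + 1)/2 + b = (((n:ℝ)+1)/2 + b) + 1 by push_cast; ring,
        Real.Gamma_add_one (by positivity)]
    have hfd : ((((n+2)/2).factorial : ℝ)) = ((n:ℝ)/2 + 1) * ((n/2).factorial : ℝ) := by
      rw [hdiv2, Nat.factorial_succ]
      have : ((n/2 : ℕ) : ℝ) = (n:ℝ)/2 := by
        rw [hn2]; rw [hk]; push_cast; ring
      push_cast
      rw [this]
    have hG1 : Real.Gamma (((n:ℝ)+1)/2 + b) ≠ 0 := by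
      have := Real.Gamma_pos_of_pos (show 0 < ((n:ℝ)+1)/2 + b by positivity)
      linarith
    have hfk : ((n/2).factorial : ℝ) ≠ 0 := by positivity
    have hx : (((n:ℝ)+1)/2 + b) ≠ 0 := by positivity
    simp only [Rhs, hfac, hpow, hneg, hgamma, hfd]
    field_simp
    ring
  · have h1 : (1 + (-1:ℝ)^n) = 0 := by
      rw [ho.neg_one_pow]; ring
    have h2 : (1 + (-1:ℝ)^(n+2)) = 0 := by
      rw [pow_add]; norm_num; rw [ho.neg_one_pow]; norm_num
    simp [Rhs, h1, h2]

lemma base0 (b : ℝ) (hb : 0 < b) : ∑ j ∈ range 1, Tm b 0 j = Rhs b 0 := by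
  have hG : Real.Gamma (b + 1/2) ≠ 0 :=
    ne_of_gt (Real.Gamma_pos_of_pos (by positivity))
  rw [Finset.sum_range_one]
  have hT : Tm b 0 0 = 1 := by simp [Tm]
  rw [hT]
  simp only [Rhs, Nat.cast_zero, Nat.factorial_zero, Nat.cast_one, Nat.zero_div]
  rw [show -(0:ℝ)-1 = ((-1:ℤ):ℝ) by norm_num, Real.rpow_intCast,
    show ((0:ℝ)+1)/2 + b = b + 1/2 by ring]
  field_simp
  norm_num

lemma base1 (b : ℝ) (hb : 0 < b) : ∑ j ∈ range 2, Tm b 1 j = Rhs b 1 := by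
  have h1 : (1 + (-1:ℝ)^1) = 0 := by norm_num
  rw [Finset.sum_range_succ, Finset.sum_range_one]
  have hT0 : Tm b 1 0 = 1 := by simp [Tm]
  have hT1 : Tm b 1 1 = -1 := by
    simp only [Tm]
    simp [ascPochhammer_one]
    field_simp
  rw [hT0, hT1]
  simp [Rhs, h1]

lemma main_lemma (b : ℝ) (hb : 0 < b) (n : ℕ) :
    ∑ j ∈ range (n+1), Tm b n j = Rhs b n := by
  induction n using Nat.strong_induction_on with
  | _ n ih =>
    match n, ih with
    | 0, _ => exact base0 b hb
    | 1, _ => exact base1 b hb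
    | (m+2), ih =>
      have hrec := Srec b hb m
      have hext : ∑ j ∈ range (m+3), Tm b m j = ∑ j ∈ range (m+1), Tm b m j :=
        sum_ext b m (m+3) (by omega)
      have hm : ∑ j ∈ range (m+1), Tm b m j = Rhs b m := ih m (by omega)
      have hpos : (0:ℝ) < 2*b + (m:ℝ) + 1 := by positivity
      have hrr := RhsRec b hb m
      have : (2*b + (m:ℝ) + 1) * (∑ j ∈ range (m+3), Tm b (m+2) j)
          = (2*b + (m:ℝ) + 1) * Rhs b (m+2) := by
        rw [hrec, hext, hm, hrr]
      have h2 := mul_left_cancel₀ (ne_of_gt hpos) this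
      rw [show m+2+1 = m+3 from rfl]
      exact h2

theorem stmt14 (n : ℕ) (b : ℝ) (hb : 0 < b) :
    ∑ j ∈ Finset.range (n + 1),
      ((ascPochhammer ℝ j).eval (-(n : ℝ)) * (ascPochhammer ℝ j).eval b
        / ((ascPochhammer ℝ j).eval (2 * b) * (j.factorial : ℝ))) * (2 : ℝ) ^ j
    = (n.factorial : ℝ) * (2 : ℝ) ^ (-(n : ℝ) - 1) * (1 + (-1 : ℝ) ^ n)
        * Real.Gamma (b + 1/2)
        / (((n / 2).factorial : ℝ) * Real.Gamma (((n : ℝ) + 1) / 2 + b)) := by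
  exact main_lemma b hb n
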